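/- If f : [a,b] → ℝ is absolutely continuous with a < b, and M is a real number such that f'(t) ≤ M for almost every t ∈ [a,b], then |∫_a^b f(t) dt − (b−a)/90 · (7f(a) + 32f((3a+b)/4) + 12f((a+b)/2) + 32f((a+3b)/4) + 7f(b))| ≤ (11/60) · (M − (f(b)−f(a))/(b−a)) · (b−a)². -/

import Mathlib

open MeasureTheory Set


-- step 1: ∫ f over Icc in terms of kernel (b-s) f'
lemma fub (a b : ℝ) (f' : ℝ → ℝ)
    (hint : IntegrableOn f' (Set.Icc a b)) :
    ∫ t in Icc a b, (∫ s in Icc a b, (Iic t).indicator f' s)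
      = ∫ s in Icc a b, (b - s) * f' s := by
  set μ := volume.restrict (Icc a b) with hμ
  have hD : MeasurableSet {p : ℝ × ℝ | p.2 ≤ p.1} :=
    measurableSet_le measurable_snd measurable_fst
  have hunc : Function.uncurry (fun t s => (Iic t).indicator f' s)
      = Set.indicator {p : ℝ × ℝ | p.2 ≤ p.1} (fun p => f' p.2) := by
    ext p
    simp [Function.uncurry, Set.indicator_apply, Set.mem_Iic]
  have hint2 : Integrable (fun p : ℝ × ℝ => f' p.2) (μ.prod μ) := by
    have hmap : Measure.map Prod.snd (μ.prod μ) = (μ Set.univ) • μ :=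
      Measure.map_snd_prod
    have : Integrable f' ((μ Set.univ) • μ) := by
      apply hint.smul_measure
      simp [hμ, Measure.restrict_apply_univ, Real.volume_Icc]
    exact (hmap ▸ this).comp_measurable measurable_snd
  have hIunc : Integrable (Function.uncurry (fun t s => (Iic t).indicator f' s)) (μ.prod μ) := by
    rw [hunc]; exact hint2.indicator hD
  have swap := MeasureTheory.integral_integral_swap hIunc
  rw [hμ] at swap ⊢
  rw [swap]
  apply setIntegral_congr_fun measurableSet_Icc
  intro s hs
  show (∫ t in Icc a b, (Iic t).indicator f' s) = (b - s) * f' s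
  have he : (fun t => (Iic t).indicator f' s) = fun t => (Ici s).indicator (fun _ => f' s) t := by
    ext t
    by_cases h : s ≤ t <;> simp [Set.indicator_apply, h]
  rw [he, setIntegral_indicator measurableSet_Ici, setIntegral_const]
  have : Icc a b ∩ Ici s = Icc s b := by
    ext x; simp only [Set.mem_inter_iff, Set.mem_Icc, Set.mem_Ici]
    constructor
    · rintro ⟨⟨_, h2⟩, h3⟩; exact ⟨h3, h2⟩
    · rintro ⟨h1, h2⟩; exact ⟨⟨le_trans hs.1 h1, h2⟩, h1⟩
  rw [this, Real.volume_real_Icc_of_le hs.2, smul_eq_mul]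

lemma intfub (a b : ℝ) (f' : ℝ → ℝ)
    (hint : IntegrableOn f' (Set.Icc a b)) :
    Integrable (fun t => ∫ s in Icc a b, (Iic t).indicator f' s)
      (volume.restrict (Icc a b)) := by
  set μ := volume.restrict (Icc a b) with hμ
  have hD : MeasurableSet {p : ℝ × ℝ | p.2 ≤ p.1} :=
    measurableSet_le measurable_snd measurable_fst
  have hunc : Function.uncurry (fun t s => (Iic t).indicator f' s)
      = Set.indicator {p : ℝ × ℝ | p.2 ≤ p.1} (fun p => f' p.2) := by
    ext p
    simp [Function.uncurry, Set.indicator_apply, Set.mem_Iic]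
  have hint2 : Integrable (fun p : ℝ × ℝ => f' p.2) (μ.prod μ) := by
    have hmap : Measure.map Prod.snd (μ.prod μ) = (μ Set.univ) • μ :=
      Measure.map_snd_prod
    have : Integrable f' ((μ Set.univ) • μ) := by
      apply hint.smul_measure
      simp [hμ, Measure.restrict_apply_univ, Real.volume_Icc]
    exact (hmap ▸ this).comp_measurable measurable_snd
  have hIunc : Integrable (Function.uncurry (fun t s => (Iic t).indicator f' s)) (μ.prod μ) := by
    rw [hunc]; exact hint2.indicator hD
  exact hIunc.integral_prod_left

lemma Kbd (a b s : ℝ) (hab : a < b) (hsa : a ≤ s) (hsb : s ≤ b) :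
    |b - s - (b - a)/90 *
      (32*(if s ≤ (3*a+b)/4 then (1:ℝ) else 0) + 12*(if s ≤ (a+b)/2 then (1:ℝ) else 0)
        + 32*(if s ≤ (a+3*b)/4 then (1:ℝ) else 0) + 7*(if s ≤ b then (1:ℝ) else 0))|
      ≤ 11/60 * (b - a) := by
  rw [if_pos hsb]
  rcases le_or_gt s ((3*a+b)/4) with h1 | h1
  · rw [if_pos h1, if_pos (by linarith), if_pos (by linarith), abs_le]
    constructor <;> linarith
  · rw [if_neg (not_le.mpr h1)]
    rcases le_or_gt s ((a+b)/2) with h2 | h2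
    · rw [if_pos h2, if_pos (by linarith), abs_le]
      constructor <;> linarith
    · rw [if_neg (not_le.mpr h2)]
      rcases le_or_gt s ((a+3*b)/4) with h3 | h3
      · rw [if_pos h3, abs_le]
        constructor <;> linarith
      · rw [if_neg (not_le.mpr h3), abs_le]
        constructor <;> linarith

theorem boole_bound_1 (a b M : ℝ) (hab : a < b) (f f' : ℝ → ℝ)
    (hint : MeasureTheory.IntegrableOn f' (Set.Icc a b))
    (hac : ∀ x ∈ Set.Icc a b, f x - f a = ∫ t in a..x, f' t)
    (hbound : ∀ᵐ t, t ∈ Set.Icc a b → f' t ≤ M) :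
    |(∫ t in a..b, f t) - (b - a)/90 * (7*f a + 32*f ((3*a+b)/4) + 12*f ((a+b)/2) + 32*f ((a+3*b)/4) + 7*f b)| ≤ (11/60 * (M - (f b - f a)/(b - a))) * (b - a)^2 := by
  set μ := volume.restrict (Icc a b) with hμ
  haveI hfin : IsFiniteMeasure μ := by
    constructor
    rw [hμ, Measure.restrict_apply_univ, Real.volume_Icc]
    exact ENNReal.ofReal_lt_top
  set q1 := (3*a+b)/4 with hq1
  set m := (a+b)/2 with hm
  set q3 := (a+3*b)/4 with hq3
  have haq1 : a < q1 := by rw [hq1]; linarith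
  have hq1m : q1 < m := by rw [hq1, hm]; linarith
  have hmq3 : m < q3 := by rw [hm, hq3]; linarith
  have hq3b : q3 < b := by rw [hq3]; linarith
  -- node identity
  have hnode : ∀ x ∈ Icc a b, f x = f a + ∫ s in Icc a b, (Iic x).indicator f' s := by
    intro x hx
    have h1 := hac x hx
    rw [setIntegral_indicator measurableSet_Iic]
    have h2 : Icc a b ∩ Iic x = Icc a x := by
      ext y; simp only [mem_inter_iff, mem_Icc, mem_Iic]
      exact ⟨fun ⟨⟨u, _⟩, w⟩ => ⟨u, w⟩, fun ⟨u, w⟩ => ⟨⟨u, le_trans w hx.2⟩, w⟩⟩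
    rw [h2, integral_Icc_eq_integral_Ioc, ← intervalIntegral.integral_of_le hx.1]
    linarith
  -- integral of f
  have hI : (∫ t in a..b, f t) = (b - a) * f a + ∫ s in Icc a b, (b - s) * f' s := by
    rw [intervalIntegral.integral_of_le hab.le, ← integral_Icc_eq_integral_Ioc]
    rw [← fub a b f' hint]
    rw [setIntegral_congr_fun measurableSet_Icc hnode]
    rw [integral_add (integrable_const _) (intfub a b f' hint)]
    congr 1
    rw [setIntegral_const, smul_eq_mul, Real.volume_real_Icc_of_le hab.le]
  -- abbreviations
  set A : ℝ → ℝ := fun x => ∫ s in Icc a b, (Iic x).indicator f' s with hA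
  have hAint : ∀ x : ℝ, Integrable ((Iic x).indicator f') μ :=
    fun x => hint.indicator measurableSet_Iic
  have hJint : Integrable (fun s => (b - s) * f' s) μ := by
    apply Integrable.mono' (hint.abs.const_mul (b - a))
    · exact (continuous_const.sub continuous_id).aestronglyMeasurable.mul hint.1
    · filter_upwards [ae_restrict_mem measurableSet_Icc] with s hs
      rw [Real.norm_eq_abs, abs_mul]
      apply mul_le_mul_of_nonneg_right _ (abs_nonneg _)
      rw [abs_of_nonneg (by linarith [hs.2] : (0:ℝ) ≤ b - s)]
      linarith [hs.1]
  set K : ℝ → ℝ := fun s => (b - s) - (b - a)/90 *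
      (32*(if s ≤ q1 then (1:ℝ) else 0) + 12*(if s ≤ m then (1:ℝ) else 0)
        + 32*(if s ≤ q3 then (1:ℝ) else 0) + 7*(if s ≤ b then (1:ℝ) else 0)) with hK
  -- Kf' expansion
  have hKf'eq : (fun s => K s * f' s) = fun s =>
      (b - s) * f' s - ((b-a)*32/90) * ((Iic q1).indicator f' s)
        - ((b-a)*12/90) * ((Iic m).indicator f' s)
        - ((b-a)*32/90) * ((Iic q3).indicator f' s)
        - ((b-a)*7/90) * ((Iic b).indicator f' s) := by
    funext s
    simp only [hK, indicator_apply, mem_Iic]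
    split_ifs <;> ring
  have hKf'int : Integrable (fun s => K s * f' s) μ := by
    rw [hKf'eq]
    exact (((hJint.sub ((hAint q1).const_mul _)).sub ((hAint m).const_mul _)).sub
      ((hAint q3).const_mul _)).sub ((hAint b).const_mul _)
  have i1 : Integrable (fun s => (b - s) * f' s - ((b-a)*32/90) * ((Iic q1).indicator f' s)) μ :=
    hJint.sub ((hAint q1).const_mul _)
  have i2 : Integrable (fun s => (b - s) * f' s - ((b-a)*32/90) * ((Iic q1).indicator f' s)
      - ((b-a)*12/90) * ((Iic m).indicator f' s)) μ := i1.sub ((hAint m).const_mul _)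
  have i3 : Integrable (fun s => (b - s) * f' s - ((b-a)*32/90) * ((Iic q1).indicator f' s)
      - ((b-a)*12/90) * ((Iic m).indicator f' s)
      - ((b-a)*32/90) * ((Iic q3).indicator f' s)) μ := i2.sub ((hAint q3).const_mul _)
  have hKf' : (∫ s in Icc a b, K s * f' s) =
      (∫ s in Icc a b, (b - s) * f' s) - ((b-a)*32/90) * A q1
        - ((b-a)*12/90) * A m - ((b-a)*32/90) * A q3 - ((b-a)*7/90) * A b := by
    rw [hKf'eq, integral_sub i3 ((hAint b).const_mul _), integral_sub i2 ((hAint q3).const_mul _),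
      integral_sub i1 ((hAint m).const_mul _), integral_sub hJint ((hAint q1).const_mul _),
      integral_const_mul, integral_const_mul, integral_const_mul, integral_const_mul]
  -- error as kernel integral
  have hE : (∫ t in a..b, f t) - (b - a)/90 * (7*f a + 32*f q1 + 12*f m + 32*f q3 + 7*f b)
      = ∫ s in Icc a b, K s * f' s := by
    rw [hI, hKf', hnode q1 ⟨haq1.le, by linarith⟩, hnode m ⟨by linarith, by linarith⟩,
      hnode q3 ⟨by linarith, hq3b.le⟩, hnode b ⟨hab.le, le_refl b⟩]
    ring
  -- integral of indicator constants
  have hIndInt : ∀ x : ℝ, Integrable (fun s => if s ≤ x then (1:ℝ) else 0) μ := by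
    intro x
    have : (fun s => if s ≤ x then (1:ℝ) else 0) = (Iic x).indicator (fun _ => (1:ℝ)) := by
      funext s; simp [indicator_apply]
    rw [this]
    exact (integrable_const _).indicator measurableSet_Iic
  have hIndVal : ∀ x : ℝ, a ≤ x → x ≤ b →
      (∫ s in Icc a b, (if s ≤ x then (1:ℝ) else 0)) = x - a := by
    intro x hax hxb
    have : (fun s => if s ≤ x then (1:ℝ) else 0) = (Iic x).indicator (fun _ => (1:ℝ)) := by
      funext s; simp [indicator_apply]
    rw [this, setIntegral_indicator measurableSet_Iic]
    have h2 : Icc a b ∩ Iic x = Icc a x := by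
      ext y; simp only [mem_inter_iff, mem_Icc, mem_Iic]
      exact ⟨fun ⟨⟨u, _⟩, w⟩ => ⟨u, w⟩, fun ⟨u, w⟩ => ⟨⟨u, le_trans w hxb⟩, w⟩⟩
    rw [h2, setIntegral_const, smul_eq_mul, Real.volume_real_Icc_of_le hax, mul_one]
  have hbsint : Integrable (fun s => b - s) μ :=
    (continuous_const.sub continuous_id).integrableOn_Icc
  have hbsval : (∫ s in Icc a b, (b - s)) = (b-a)^2/2 := by
    rw [integral_Icc_eq_integral_Ioc, ← intervalIntegral.integral_of_le hab.le]
    rw [intervalIntegral.integral_sub intervalIntegrable_const intervalIntegral.intervalIntegrable_id,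
      intervalIntegral.integral_const, integral_id, smul_eq_mul]
    ring
  have j1 : Integrable (fun s => (b - s) - ((b-a)*32/90) * (if s ≤ q1 then (1:ℝ) else 0)) μ :=
    hbsint.sub ((hIndInt q1).const_mul _)
  have j2 : Integrable (fun s => (b - s) - ((b-a)*32/90) * (if s ≤ q1 then (1:ℝ) else 0)
      - ((b-a)*12/90) * (if s ≤ m then (1:ℝ) else 0)) μ := j1.sub ((hIndInt m).const_mul _)
  have j3 : Integrable (fun s => (b - s) - ((b-a)*32/90) * (if s ≤ q1 then (1:ℝ) else 0)
      - ((b-a)*12/90) * (if s ≤ m then (1:ℝ) else 0)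
      - ((b-a)*32/90) * (if s ≤ q3 then (1:ℝ) else 0)) μ := j2.sub ((hIndInt q3).const_mul _)
  have hK0 : (∫ s in Icc a b, K s) = 0 := by
    have heq : K = fun s => (b - s) - ((b-a)*32/90) * (if s ≤ q1 then (1:ℝ) else 0)
        - ((b-a)*12/90) * (if s ≤ m then (1:ℝ) else 0)
        - ((b-a)*32/90) * (if s ≤ q3 then (1:ℝ) else 0)
        - ((b-a)*7/90) * (if s ≤ b then (1:ℝ) else 0) := by
      funext s; simp only [hK]; ring
    rw [heq, integral_sub j3 ((hIndInt b).const_mul _), integral_sub j2 ((hIndInt q3).const_mul _),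
      integral_sub j1 ((hIndInt m).const_mul _), integral_sub hbsint ((hIndInt q1).const_mul _),
      integral_const_mul, integral_const_mul, integral_const_mul, integral_const_mul,
      hbsval, hIndVal q1 haq1.le (by linarith), hIndVal m (by linarith) (by linarith),
      hIndVal q3 (by linarith) hq3b.le, hIndVal b hab.le (le_refl b)]
    rw [hq1, hm, hq3]
    ring
  have hKint : Integrable K μ := by
    have heq : K = fun s => (b - s) - ((b-a)*32/90) * (if s ≤ q1 then (1:ℝ) else 0)
        - ((b-a)*12/90) * (if s ≤ m then (1:ℝ) else 0)
        - ((b-a)*32/90) * (if s ≤ q3 then (1:ℝ) else 0)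
        - ((b-a)*7/90) * (if s ≤ b then (1:ℝ) else 0) := by
      funext s; simp only [hK]; ring
    rw [heq]
    exact j3.sub ((hIndInt b).const_mul _)
  -- replace f' by f' - M inside
  have hKfM_eq : (fun s => K s * (f' s - M)) = fun s => K s * f' s - M * K s := by
    funext s; ring
  have hKfM_int : Integrable (fun s => K s * (f' s - M)) μ := by
    rw [hKfM_eq]
    exact hKf'int.sub (hKint.const_mul M)
  have hE2 : (∫ s in Icc a b, K s * f' s) = ∫ s in Icc a b, K s * (f' s - M) := by
    rw [hKfM_eq, integral_sub hKf'int (hKint.const_mul M), integral_const_mul, hK0]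
    ring
  -- pointwise kernel bound
  have hKbd : ∀ s ∈ Icc a b, |K s| ≤ 11/60 * (b - a) := by
    intro s hs
    rw [hK]
    exact Kbd a b s hab hs.1 hs.2
  -- nonnegativity of M - f' a.e.
  have hMf' : ∀ᵐ s ∂μ, f' s ≤ M := by
    have h1 : ∀ᵐ s ∂μ, s ∈ Icc a b → f' s ≤ M := ae_restrict_of_ae hbound
    have h2 : ∀ᵐ s ∂μ, s ∈ Icc a b := ae_restrict_mem measurableSet_Icc
    filter_upwards [h1, h2] with s hs1 hs2 using hs1 hs2
  -- total variation bound
  have hfb : (∫ s in Icc a b, f' s) = f b - f a := by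
    rw [integral_Icc_eq_integral_Ioc, ← intervalIntegral.integral_of_le hab.le]
    exact (hac b ⟨hab.le, le_refl b⟩).symm
  have hmain : |∫ s in Icc a b, K s * (f' s - M)| ≤
      11/60 * (b - a) * (M * (b - a) - (f b - f a)) := by
    calc |∫ s in Icc a b, K s * (f' s - M)| ≤ ∫ s in Icc a b, |K s * (f' s - M)| :=
          by simpa only [Real.norm_eq_abs] using
            norm_integral_le_integral_norm (μ := μ) (fun s => K s * (f' s - M))
      _ ≤ ∫ s in Icc a b, 11/60 * (b - a) * (M - f' s) := by
          apply integral_mono_ae hKfM_int.abs (((integrable_const M).sub hint).const_mul _)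
          filter_upwards [hMf', ae_restrict_mem measurableSet_Icc] with s hs1 hs2
          rw [abs_mul]
          have h1 : |f' s - M| = M - f' s := by rw [abs_sub_comm, abs_of_nonneg (by linarith)]
          rw [h1]
          exact mul_le_mul_of_nonneg_right (hKbd s hs2) (by linarith)
      _ = 11/60 * (b - a) * (M * (b - a) - (f b - f a)) := by
          rw [integral_const_mul, integral_sub (integrable_const M) hint, hfb,
            setIntegral_const, smul_eq_mul, Real.volume_real_Icc_of_le hab.le]
          ring
  rw [hE, hE2]
  have h0 : b - a ≠ 0 := by linarith
  have h1 : (M - (f b - f a)/(b - a)) * (b - a) = M * (b - a) - (f b - f a) := by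
    rw [sub_mul, div_mul_cancel₀ _ h0]
  calc |∫ s in Icc a b, K s * (f' s - M)| ≤ 11/60 * (b - a) * (M * (b - a) - (f b - f a)) := hmain
    _ = (11/60 * (M - (f b - f a)/(b - a))) * (b - a)^2 := by
        rw [← h1]; ring
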